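/- Variance decomposition: Var_P(g_pg) = ∑_{y ∈ (C × A)^n} P y * (g_pg y − g_vr (chains y))² + Var_Q(g_vr), where chains y = (c_1,…,c_n) for y = ((c_1,a_1),…,(c_n,a_n)). -/

import Mathlib

open Finset

private lemma sum_fn_prod {n : ℕ} {A : Type*} [Fintype A] (g : Fin n → A → ℝ) :
    ∑ a : Fin n → A, ∏ k, g k (a k) = ∏ k, ∑ b, g k b := by
  rw [Finset.prod_univ_sum, Fintype.piFinset_univ]

private lemma sum_single {n : ℕ} {A : Type*} [Fintype A]
    (μ : Fin n → A → ℝ) (hμ : ∀ k, ∑ b, μ k b = 1) (i : Fin n) (f : A → ℝ) :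
    ∑ a : Fin n → A, (∏ k, μ k (a k)) * f (a i) = ∑ b, μ i b * f b := by
  classical
  have h1 : ∑ a : Fin n → A, (∏ k, μ k (a k)) * f (a i)
      = ∑ a : Fin n → A, ∏ k, (fun k b => μ k b * (if k = i then f b else 1)) k (a k) := by
    refine Finset.sum_congr rfl fun a _ => ?_
    simp only [Finset.prod_mul_distrib, Finset.prod_ite_eq' Finset.univ, Finset.mem_univ,
      if_true]
  rw [h1, sum_fn_prod (fun k b => μ k b * (if k = i then f b else 1))]
  rw [Finset.prod_eq_single i]
  · simp
  · intro k _ hk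
    simp [hk, hμ k]
  · simp

private lemma sum_pair {n : ℕ} {A : Type*} [Fintype A]
    (μ : Fin n → A → ℝ) (hμ : ∀ k, ∑ b, μ k b = 1) {i j : Fin n} (hij : i ≠ j)
    (f g : A → ℝ) :
    ∑ a : Fin n → A, (∏ k, μ k (a k)) * (f (a i) * g (a j))
      = (∑ b, μ i b * f b) * (∑ b, μ j b * g b) := by
  classical
  have h1 : ∑ a : Fin n → A, (∏ k, μ k (a k)) * (f (a i) * g (a j))
      = ∑ a : Fin n → A, ∏ k,
          (fun k b => μ k b * ((if k = i then f b else 1) * (if k = j then g b else 1))) k (a k) := by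
    refine Finset.sum_congr rfl fun a _ => ?_
    simp only [Finset.prod_mul_distrib, Finset.prod_ite_eq' Finset.univ, Finset.mem_univ,
      if_true]
  rw [h1, sum_fn_prod (fun k b => μ k b * ((if k = i then f b else 1) * (if k = j then g b else 1)))]
  rw [← Finset.mul_prod_erase _ _ (Finset.mem_univ i),
      ← Finset.mul_prod_erase _ _ (Finset.mem_erase.mpr ⟨hij.symm, Finset.mem_univ j⟩),
      Finset.prod_eq_one, mul_one]
  · simp [if_neg hij, if_neg hij.symm]
  · intro k hk
    simp only [Finset.mem_erase] at hk
    simp [hk.1, hk.2.1, hμ k]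

private lemma score_mul {κ : ℝ → ℝ} {θ₀ : ℝ} (hpos : 0 < κ θ₀)
    (hdiff : DifferentiableAt ℝ κ θ₀) :
    κ θ₀ * deriv (fun θ => Real.log (κ θ)) θ₀ = deriv κ θ₀ := by
  rw [deriv.log hdiff hpos.ne']
  field_simp

private lemma score_zero {A : Type*} [Fintype A] {κ : ℝ → A → ℝ} {θ₀ : ℝ}
    (hκ1 : ∀ θ, ∑ a, κ θ a = 1)
    (hpos : ∀ a, 0 < κ θ₀ a) (hdiff : ∀ a, DifferentiableAt ℝ (fun θ => κ θ a) θ₀) :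
    ∑ a, κ θ₀ a * deriv (fun θ => Real.log (κ θ a)) θ₀ = 0 := by
  have h1 : ∀ a ∈ Finset.univ, κ θ₀ a * deriv (fun θ => Real.log (κ θ a)) θ₀
      = deriv (fun θ => κ θ a) θ₀ := fun a _ => score_mul (hpos a) (hdiff a)
  rw [Finset.sum_congr rfl h1, ← deriv_fun_sum (fun a _ => hdiff a)]
  have : (fun θ => ∑ a, κ θ a) = fun _ => (1 : ℝ) := funext fun θ => hκ1 θ
  rw [this, deriv_const]

private lemma cond_exp_i {n : ℕ} {A : Type*} [Fintype A]
    (μ : Fin n → A → ℝ) (hμ : ∀ k, ∑ b, μ k b = 1) (i : Fin n) (S e : ℝ)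
    (sa r : A → ℝ) (hz : ∑ b, μ i b * sa b = 0) :
    ∑ a : Fin n → A, (∏ k, μ k (a k)) *
      ((S + sa (a i)) * (r (a i) - e * ∑ j ∈ Finset.univ.erase i, r (a j)))
    = (∑ b, μ i b * ((S + sa b) * r b))
      - e * ∑ j ∈ Finset.univ.erase i, S * (∑ b, μ j b * r b) := by
  classical
  have hpt : ∀ a : Fin n → A,
      (∏ k, μ k (a k)) * ((S + sa (a i)) * (r (a i) - e * ∑ j ∈ Finset.univ.erase i, r (a j)))
      = (∏ k, μ k (a k)) * ((fun b => (S + sa b) * r b) (a i))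
        - e * ∑ j ∈ Finset.univ.erase i,
            (∏ k, μ k (a k)) * ((fun b => S + sa b) (a i) * r (a j)) := by
    intro a
    have h2 : ∑ j ∈ Finset.univ.erase i,
        (∏ k, μ k (a k)) * ((S + sa (a i)) * r (a j))
        = ((∏ k, μ k (a k)) * (S + sa (a i))) * ∑ j ∈ Finset.univ.erase i, r (a j) := by
      rw [Finset.mul_sum]
      exact Finset.sum_congr rfl fun j _ => by ring
    simp only [h2]
    ring
  rw [Finset.sum_congr rfl (fun a _ => hpt a), Finset.sum_sub_distrib,
    sum_single μ hμ i (fun b => (S + sa b) * r b)]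
  have h3 : ∑ a : Fin n → A, e * ∑ j ∈ Finset.univ.erase i,
        (∏ k, μ k (a k)) * ((fun b => S + sa b) (a i) * r (a j))
      = e * ∑ j ∈ Finset.univ.erase i,
          ∑ a : Fin n → A, (∏ k, μ k (a k)) * ((fun b => S + sa b) (a i) * r (a j)) := by
    rw [← Finset.mul_sum, Finset.sum_comm]
  rw [h3]
  congr 2
  refine Finset.sum_congr rfl fun j hj => ?_
  have hij : i ≠ j := fun h => (Finset.mem_erase.mp hj).1 h.symm
  rw [sum_pair μ hμ hij (fun b => S + sa b) r]
  have hzS : ∑ b, μ i b * (S + sa b) = S := by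
    simp only [mul_add, Finset.sum_add_distrib]
    rw [← Finset.sum_mul, hμ i, one_mul, hz, add_zero]
  rw [hzS]

private lemma cond_exp {n : ℕ} {C A : Type*} [Fintype A] [DecidableEq A]
    (θ₀ : ℝ) (astar : A) (κ : ℝ → C → A → ℝ)
    (hκ1 : ∀ θ c, ∑ a, κ θ c a = 1) (hκpos : ∀ c a, 0 < κ θ₀ c a)
    (hκdiff : ∀ c a, DifferentiableAt ℝ (fun θ => κ θ c a) θ₀)
    (sc : C → ℝ) (c : Fin n → C) :
    ∑ a : Fin n → A, (∏ k, κ θ₀ (c k) (a k)) *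
      (∑ i, (sc (c i) + deriv (fun θ => Real.log (κ θ (c i) (a i))) θ₀) *
        ((if a i = astar then (1:ℝ) else 0) -
          (1/((n:ℝ)-1)) * ∑ j ∈ Finset.univ.erase i, (if a j = astar then (1:ℝ) else 0)))
    = ∑ i, (sc (c i) *
        (κ θ₀ (c i) astar - (1/((n:ℝ)-1)) * ∑ j ∈ Finset.univ.erase i, κ θ₀ (c j) astar)
        + deriv (fun θ => κ θ (c i) astar) θ₀) := by
  classical
  have hμ : ∀ k, ∑ b, κ θ₀ (c k) b = 1 := fun k => hκ1 θ₀ (c k)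
  have step1 : ∑ a : Fin n → A, (∏ k, κ θ₀ (c k) (a k)) *
      (∑ i, (sc (c i) + deriv (fun θ => Real.log (κ θ (c i) (a i))) θ₀) *
        ((if a i = astar then (1:ℝ) else 0) -
          (1/((n:ℝ)-1)) * ∑ j ∈ Finset.univ.erase i, (if a j = astar then (1:ℝ) else 0)))
      = ∑ i, ∑ a : Fin n → A, (∏ k, κ θ₀ (c k) (a k)) *
          ((sc (c i) + deriv (fun θ => Real.log (κ θ (c i) (a i))) θ₀) *
            ((if a i = astar then (1:ℝ) else 0) -
              (1/((n:ℝ)-1)) * ∑ j ∈ Finset.univ.erase i, (if a j = astar then (1:ℝ) else 0))) := by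
    rw [← Finset.sum_comm]
    exact Finset.sum_congr rfl fun a _ => Finset.mul_sum _ _ _
  rw [step1]
  refine Finset.sum_congr rfl fun i _ => ?_
  have hz : ∑ b, κ θ₀ (c i) b * (fun b => deriv (fun θ => Real.log (κ θ (c i) b)) θ₀) b = 0 :=
    score_zero (κ := fun θ => κ θ (c i)) (fun θ => hκ1 θ (c i))
      (fun b => hκpos (c i) b) (fun b => hκdiff (c i) b)
  rw [cond_exp_i (fun k => κ θ₀ (c k)) hμ i (sc (c i)) (1/((n:ℝ)-1))
    (fun b => deriv (fun θ => Real.log (κ θ (c i) b)) θ₀)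
    (fun b => if b = astar then (1:ℝ) else 0) hz]
  have hf : ∑ b, κ θ₀ (c i) b *
      ((sc (c i) + deriv (fun θ => Real.log (κ θ (c i) b)) θ₀) *
        (if b = astar then (1:ℝ) else 0))
      = sc (c i) * κ θ₀ (c i) astar + deriv (fun θ => κ θ (c i) astar) θ₀ := by
    have h5 : ∑ b, κ θ₀ (c i) b *
        ((sc (c i) + deriv (fun θ => Real.log (κ θ (c i) b)) θ₀) *
          (if b = astar then (1:ℝ) else 0))
        = κ θ₀ (c i) astar * (sc (c i) + deriv (fun θ => Real.log (κ θ (c i) astar)) θ₀) := by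
      rw [Finset.sum_eq_single astar]
      · simp
      · intro b _ hb
        simp [hb]
      · simp
    rw [h5, mul_add, score_mul (hκpos (c i) astar) (hκdiff (c i) astar), mul_comm]
  have hrj : ∀ j ∈ Finset.univ.erase i, sc (c i) * (∑ b, κ θ₀ (c j) b * (if b = astar then (1:ℝ) else 0))
      = sc (c i) * κ θ₀ (c j) astar := by
    intro j _
    congr 1
    rw [Finset.sum_eq_single astar]
    · simp
    · intro b _ hb
      simp [hb]
    · simp
  rw [hf, Finset.sum_congr rfl hrj, ← Finset.mul_sum]
  ring

private lemma sum_split {n : ℕ} {C A : Type*} [Fintype C] [Fintype A]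
    (G : (Fin n → C × A) → ℝ) :
    ∑ y : Fin n → C × A, G y
      = ∑ c : Fin n → C, ∑ a : Fin n → A, G (fun i => (c i, a i)) := by
  calc ∑ y : Fin n → C × A, G y
      = ∑ p : (Fin n → C) × (Fin n → A), G (fun i => (p.1 i, p.2 i)) :=
        Fintype.sum_equiv (Equiv.arrowProdEquivProdArrow (Fin n) (fun _ => C) (fun _ => A))
          G (fun p => G fun i => (p.1 i, p.2 i)) (fun y => rfl)
    _ = ∑ c : Fin n → C, ∑ a : Fin n → A, G (fun i => (c i, a i)) :=
        Fintype.sum_prod_type _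

theorem variance_decomposition_of_pg
    {C A : Type*} [Fintype C] [Fintype A] [Nonempty C] [Nonempty A] [DecidableEq A]
    (θ₀ : ℝ) (astar : A)
    (π : ℝ → C → ℝ) (κ : ℝ → C → A → ℝ)
    (hπ0 : ∀ θ c, 0 ≤ π θ c) (hπ1 : ∀ θ, ∑ c, π θ c = 1)
    (hκ0 : ∀ θ c a, 0 ≤ κ θ c a) (hκ1 : ∀ θ c, ∑ a, κ θ c a = 1)
    (hπpos : ∀ c, 0 < π θ₀ c) (hκpos : ∀ c a, 0 < κ θ₀ c a)
    (hπdiff : ∀ c, DifferentiableAt ℝ (fun θ => π θ c) θ₀)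
    (hκdiff : ∀ c a, DifferentiableAt ℝ (fun θ => κ θ c a) θ₀)
    (n : ℕ) (hn : 2 ≤ n)
    (gpg : (Fin n → C × A) → ℝ)
    (hgpg : ∀ y, gpg y =
      (1 / (n : ℝ)) *
        ∑ i,
          (deriv (fun θ => Real.log (π θ (y i).1)) θ₀ +
              deriv (fun θ => Real.log (κ θ (y i).1 (y i).2)) θ₀) *
            ((if (y i).2 = astar then (1 : ℝ) else 0) -
              (1 / ((n : ℝ) - 1)) *
                ∑ j ∈ Finset.univ.erase i, (if (y j).2 = astar then (1 : ℝ) else 0)))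
    (gvr : (Fin n → C) → ℝ)
    (hgvr : ∀ c, gvr c =
      (1 / (n : ℝ)) *
        ∑ i,
          (deriv (fun θ => Real.log (π θ (c i))) θ₀ *
              (κ θ₀ (c i) astar -
                (1 / ((n : ℝ) - 1)) * ∑ j ∈ Finset.univ.erase i, κ θ₀ (c j) astar) +
            deriv (fun θ => κ θ (c i) astar) θ₀))
    (P : (Fin n → C × A) → ℝ)
    (hP : ∀ y, P y = ∏ i, (π θ₀ (y i).1 * κ θ₀ (y i).1 (y i).2))
    (Q : (Fin n → C) → ℝ)
    (hQ : ∀ c, Q c = ∏ i, π θ₀ (c i)) :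
    (∑ y : Fin n → C × A, P y * (gpg y) ^ 2) - (∑ y : Fin n → C × A, P y * gpg y) ^ 2 =
      (∑ y : Fin n → C × A, P y * (gpg y - gvr (fun i => (y i).1)) ^ 2) +
        ((∑ c : Fin n → C, Q c * (gvr c) ^ 2) - (∑ c : Fin n → C, Q c * gvr c) ^ 2) := by
  classical
  have hPfact : ∀ (c : Fin n → C) (a : Fin n → A),
      P (fun i => (c i, a i)) = Q c * ∏ k, κ θ₀ (c k) (a k) := by
    intro c a
    rw [hP, hQ, ← Finset.prod_mul_distrib]
  have hsum1 : ∀ c : Fin n → C, ∑ a : Fin n → A, ∏ k, κ θ₀ (c k) (a k) = 1 := by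
    intro c
    rw [sum_fn_prod]
    exact Finset.prod_eq_one fun k _ => hκ1 θ₀ (c k)
  have key : ∀ c : Fin n → C,
      ∑ a : Fin n → A, (∏ k, κ θ₀ (c k) (a k)) * gpg (fun i => (c i, a i)) = gvr c := by
    intro c
    have h1 : ∑ a : Fin n → A, (∏ k, κ θ₀ (c k) (a k)) * gpg (fun i => (c i, a i))
        = (1 / (n : ℝ)) * ∑ a : Fin n → A, (∏ k, κ θ₀ (c k) (a k)) *
            (∑ i, (deriv (fun θ => Real.log (π θ (c i))) θ₀ +
                deriv (fun θ => Real.log (κ θ (c i) (a i))) θ₀) *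
              ((if a i = astar then (1:ℝ) else 0) -
                (1/((n:ℝ)-1)) * ∑ j ∈ Finset.univ.erase i,
                  (if a j = astar then (1:ℝ) else 0))) := by
      rw [Finset.mul_sum]
      refine Finset.sum_congr rfl fun a _ => ?_
      simp only [hgpg]
      ring
    rw [h1, cond_exp θ₀ astar κ hκ1 hκpos hκdiff
      (fun x => deriv (fun θ => Real.log (π θ x)) θ₀) c, hgvr]
  have E0 : ∑ y : Fin n → C × A, P y * gpg y = ∑ c : Fin n → C, Q c * gvr c := by
    calc ∑ y : Fin n → C × A, P y * gpg y
        = ∑ c : Fin n → C, ∑ a : Fin n → A,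
            P (fun i => (c i, a i)) * gpg (fun i => (c i, a i)) :=
          sum_split _
      _ = ∑ c : Fin n → C, Q c * gvr c := by
          refine Finset.sum_congr rfl fun c _ => ?_
          rw [← key c, Finset.mul_sum]
          refine Finset.sum_congr rfl fun a _ => ?_
          rw [hPfact c a]
          ring
  have E1 : ∑ y : Fin n → C × A, P y * gpg y * gvr (fun i => (y i).1)
      = ∑ c : Fin n → C, Q c * gvr c ^ 2 := by
    calc ∑ y : Fin n → C × A, P y * gpg y * gvr (fun i => (y i).1)
        = ∑ c : Fin n → C, ∑ a : Fin n → A,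
            P (fun i => (c i, a i)) * gpg (fun i => (c i, a i)) * gvr c :=
          sum_split _
      _ = ∑ c : Fin n → C, Q c * gvr c ^ 2 := by
          refine Finset.sum_congr rfl fun c _ => ?_
          have h2 : ∑ a : Fin n → A,
              P (fun i => (c i, a i)) * gpg (fun i => (c i, a i)) * gvr c
              = Q c * gvr c * ∑ a : Fin n → A,
                  (∏ k, κ θ₀ (c k) (a k)) * gpg (fun i => (c i, a i)) := by
            rw [Finset.mul_sum]
            refine Finset.sum_congr rfl fun a _ => ?_
            rw [hPfact c a]
            ring
          rw [h2, key c]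
          ring
  have E2 : ∑ y : Fin n → C × A, P y * gvr (fun i => (y i).1) ^ 2
      = ∑ c : Fin n → C, Q c * gvr c ^ 2 := by
    calc ∑ y : Fin n → C × A, P y * gvr (fun i => (y i).1) ^ 2
        = ∑ c : Fin n → C, ∑ a : Fin n → A, P (fun i => (c i, a i)) * gvr c ^ 2 :=
          sum_split _
      _ = ∑ c : Fin n → C, Q c * gvr c ^ 2 := by
          refine Finset.sum_congr rfl fun c _ => ?_
          have h2 : ∑ a : Fin n → A, P (fun i => (c i, a i)) * gvr c ^ 2
              = Q c * gvr c ^ 2 * ∑ a : Fin n → A, ∏ k, κ θ₀ (c k) (a k) := by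
            rw [Finset.mul_sum]
            refine Finset.sum_congr rfl fun a _ => ?_
            rw [hPfact c a]
            ring
          rw [h2, hsum1 c, mul_one]
  have hexp : ∑ y : Fin n → C × A, P y * (gpg y - gvr (fun i => (y i).1)) ^ 2
      = ∑ y : Fin n → C × A, P y * gpg y ^ 2
        - 2 * ∑ y : Fin n → C × A, P y * gpg y * gvr (fun i => (y i).1)
        + ∑ y : Fin n → C × A, P y * gvr (fun i => (y i).1) ^ 2 := by
    have h3 : ∀ y : Fin n → C × A, P y * (gpg y - gvr (fun i => (y i).1)) ^ 2
        = P y * gpg y ^ 2 - 2 * (P y * gpg y * gvr (fun i => (y i).1))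
          + P y * gvr (fun i => (y i).1) ^ 2 := fun y => by ring
    rw [Finset.sum_congr rfl (fun y _ => h3 y), Finset.sum_add_distrib,
      Finset.sum_sub_distrib, ← Finset.mul_sum]
  rw [hexp, E0, E1, E2]
  ring
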